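/- arXiv:2307.15896 — 3 statements merged into one kernel-verified Lean document; each statement's English description precedes it below -/
import Mathlib

section
/- Let N ≥ 2 and θ ∈ (0, Nπ/2) with θ ≠ mπ/2 for m = 1,...,N-1. With D_g the N×N tridiagonal matrix of the previous context, for each j = 2,...,N the vector ν_j with entries ν_{l,j} = √(2/N)·sin((π(j-1)/N)(l - 1/2)) is an eigenvector of D_g with eigenvalue ξ_j = 2cot(2θ/N) - 2csc(2θ/N)·cos(π(j-1)/N). -/
open Real Matrix

lemma sum_tri {N : ℕ} (i : Fin N) (d s : ℝ) (w : Fin N → ℝ) :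
    (∑ k : Fin N, (if i = k then d else if i.val + 1 = k.val ∨ k.val + 1 = i.val then s else 0) * w k)
      = d * w i
        + (if h : i.val + 1 < N then s * w ⟨i.val + 1, h⟩ else 0)
        + (if h : 0 < i.val then s * w ⟨i.val - 1, lt_of_le_of_lt (Nat.sub_le _ _) i.isLt⟩ else 0) := by
  have key : ∀ k : Fin N,
      (if i = k then d else if i.val + 1 = k.val ∨ k.val + 1 = i.val then s else 0) * w k
      = (if k = i then d * w k else 0)
        + (if h : i.val + 1 < N then (if k = (⟨i.val + 1, h⟩ : Fin N) then s * w k else 0) else 0)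
        + (if h : 0 < i.val then (if k = (⟨i.val - 1, lt_of_le_of_lt (Nat.sub_le _ _) i.isLt⟩ : Fin N) then s * w k else 0) else 0) := by
    intro k
    have hk := k.isLt
    have hi := i.isLt
    split_ifs <;> simp only [Fin.ext_iff, Fin.val_mk, not_or] at * <;> first | ring1 | (exfalso; omega)
  rw [Finset.sum_congr rfl fun k _ => key k]
  rw [Finset.sum_add_distrib, Finset.sum_add_distrib]
  by_cases h1 : i.val + 1 < N <;> by_cases h2 : 0 < i.val <;>
    simp [h1, h2, Finset.sum_ite_eq']

/-- For `j = 2,…,N`, the vector with entries `√(2/N)·sin((π(j-1)/N)(l-1/2))`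
(`l = 1,…,N`) is an eigenvector of the dipole Green's matrix `D_g` with eigenvalue
`ξ_j = 2cot(2θ/N) - 2csc(2θ/N)·cos(π(j-1)/N)`. -/
theorem dipole_matrix_remaining_eigenpairs (N : ℕ) (hN : 2 ≤ N) (θ : ℝ)
    (hθ : 0 < θ) (hθN : θ < N * Real.pi / 2)
    (hθm : ∀ m : ℕ, 1 ≤ m → m ≤ N - 1 → θ ≠ m * Real.pi / 2)
    (Dg : Matrix (Fin N) (Fin N) ℝ)
    (hDg : Dg = Matrix.of fun i j =>
      if i = j then
        (if i.val = 0 ∨ i.val = N - 1 then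
            Real.cot (2 * θ / N) + Real.cot (θ / N)
          else 2 * Real.cot (2 * θ / N))
      else if i.val + 1 = j.val ∨ j.val + 1 = i.val then
        -(1 / Real.sin (2 * θ / N))
      else 0) :
    ∀ j : ℕ, 2 ≤ j → j ≤ N →
      Dg.mulVec
          (fun l : Fin N =>
            Real.sqrt (2 / N) * Real.sin ((Real.pi * (j - 1) / N) * ((l : ℕ) + 1 - 1 / 2))) =
        (2 * Real.cot (2 * θ / N) -
            2 * (1 / Real.sin (2 * θ / N)) * Real.cos (Real.pi * (j - 1) / N)) •
          (fun l : Fin N =>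
            Real.sqrt (2 / N) * Real.sin ((Real.pi * (j - 1) / N) * ((l : ℕ) + 1 - 1 / 2))) := by
  intro j hj2 hjN
  have hN0 : (0:ℝ) < N := by positivity
  have hNne : (N:ℝ) ≠ 0 := hN0.ne'
  have hy1 : 0 < θ / N := div_pos hθ hN0
  have hy2 : θ / N < Real.pi / 2 := by
    rw [div_lt_iff₀ hN0] at *
    nlinarith
  have hsy : 0 < Real.sin (θ / N) :=
    Real.sin_pos_of_pos_of_lt_pi hy1 (lt_trans hy2 (by linarith [Real.pi_pos]))
  have hcy : 0 < Real.cos (θ / N) := Real.cos_pos_of_mem_Ioo ⟨by linarith [Real.pi_pos], hy2⟩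
  have h2y : (2:ℝ) * θ / N = 2 * (θ / N) := by ring
  have hs2 : 0 < Real.sin (2 * θ / N) := by
    rw [h2y, Real.sin_two_mul]; positivity
  have hts : Real.cot (θ / N) = Real.cot (2 * θ / N) + 1 / Real.sin (2 * θ / N) := by
    rw [Real.cot_eq_cos_div_sin, Real.cot_eq_cos_div_sin, h2y, Real.sin_two_mul, Real.cos_two_mul]
    field_simp
    ring
  funext i
  rw [hDg]
  simp only [Matrix.mulVec, dotProduct, Matrix.of_apply, Pi.smul_apply, smul_eq_mul]
  rw [sum_tri i _ _ (fun l : Fin N =>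
      Real.sqrt (2 / N) * Real.sin ((Real.pi * ((j:ℝ) - 1) / N) * ((l : ℕ) + 1 - 1 / 2)))]
  have I2 : ∀ x a : ℝ, Real.sin (x + a) + Real.sin (x - a) = 2 * Real.sin x * Real.cos a := by
    intro x a; rw [Real.sin_add, Real.sin_sub]; ring
  have hβ : Real.sin (Real.pi * (j:ℝ) - Real.pi) = 0 := by
    have h : Real.pi * (j:ℝ) - Real.pi = ((j - 1 : ℕ) : ℝ) * Real.pi := by
      rw [Nat.cast_sub (by omega : 1 ≤ j)]
      push_cast; ring
    rw [h, Real.sin_nat_mul_pi]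
  by_cases h0 : i.val = 0
  · -- left corner row
    rw [if_pos (Or.inl h0), dif_pos (show i.val + 1 < N by omega),
        dif_neg (show ¬ 0 < i.val by omega)]
    have hE0 : (Real.pi * ((j:ℝ) - 1) / N) * (((i:ℕ):ℝ) + 1 - 1 / 2)
        = (Real.pi * ((j:ℝ) - 1) / N) * (1/2) := by rw [h0]; norm_num
    have hE1 : (Real.pi * ((j:ℝ) - 1) / N) * ((((i:ℕ) + 1 :ℕ):ℝ) + 1 - 1 / 2)
        = (Real.pi * ((j:ℝ) - 1) / N) * (3/2) := by
      rw [show (i:ℕ) + 1 = 1 by omega]; norm_num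
    rw [hE0, hE1]
    have hI1 : Real.sin ((Real.pi * ((j:ℝ) - 1) / N) * (3/2))
        = Real.sin ((Real.pi * ((j:ℝ) - 1) / N) * (1/2))
          + 2 * Real.sin ((Real.pi * ((j:ℝ) - 1) / N) * (1/2)) * Real.cos (Real.pi * ((j:ℝ) - 1) / N) := by
      have h := I2 ((Real.pi * ((j:ℝ) - 1) / N) * (1/2)) (Real.pi * ((j:ℝ) - 1) / N)
      rw [show (Real.pi * ((j:ℝ) - 1) / N) * (1/2) + (Real.pi * ((j:ℝ) - 1) / N)
            = (Real.pi * ((j:ℝ) - 1) / N) * (3/2) from by ring,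
          show (Real.pi * ((j:ℝ) - 1) / N) * (1/2) - (Real.pi * ((j:ℝ) - 1) / N)
            = -((Real.pi * ((j:ℝ) - 1) / N) * (1/2)) from by ring,
          Real.sin_neg] at h
      linarith
    rw [hts]
    linear_combination (-(Real.sqrt (2 / (N:ℝ)) * (1 / Real.sin (2 * θ / N)))) * hI1
  · by_cases hL : i.val = N - 1
    · -- right corner row
      rw [if_pos (Or.inr hL), dif_neg (show ¬ (i.val + 1 < N) by omega),
          dif_pos (show 0 < i.val by omega)]
      have hEi : (Real.pi * ((j:ℝ) - 1) / N) * (((i:ℕ):ℝ) + 1 - 1 / 2)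
          = (Real.pi * (j:ℝ) - Real.pi) - (Real.pi * ((j:ℝ) - 1) / N) * (1/2) := by
        rw [show (i:ℕ) = N - 1 from hL, Nat.cast_sub (by omega : 1 ≤ N)]
        field_simp
        ring
      have hEl : (Real.pi * ((j:ℝ) - 1) / N) * ((((i:ℕ) - 1 :ℕ):ℝ) + 1 - 1 / 2)
          = (Real.pi * (j:ℝ) - Real.pi) - (Real.pi * ((j:ℝ) - 1) / N) * (3/2) := by
        rw [show (i:ℕ) - 1 = N - 2 by omega, Nat.cast_sub (by omega : 2 ≤ N)]
        push_cast
        field_simp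
        ring
      rw [hEi, hEl]
      have hB : Real.sin ((Real.pi * (j:ℝ) - Real.pi) + (Real.pi * ((j:ℝ) - 1) / N) * (1/2))
          = - Real.sin ((Real.pi * (j:ℝ) - Real.pi) - (Real.pi * ((j:ℝ) - 1) / N) * (1/2)) := by
        have h := I2 (Real.pi * (j:ℝ) - Real.pi) ((Real.pi * ((j:ℝ) - 1) / N) * (1/2))
        rw [hβ] at h
        linarith [h]
      have hI1 : Real.sin ((Real.pi * (j:ℝ) - Real.pi) - (Real.pi * ((j:ℝ) - 1) / N) * (3/2))
          = Real.sin ((Real.pi * (j:ℝ) - Real.pi) - (Real.pi * ((j:ℝ) - 1) / N) * (1/2))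
            + 2 * Real.sin ((Real.pi * (j:ℝ) - Real.pi) - (Real.pi * ((j:ℝ) - 1) / N) * (1/2))
              * Real.cos (Real.pi * ((j:ℝ) - 1) / N) := by
        have h := I2 ((Real.pi * (j:ℝ) - Real.pi) - (Real.pi * ((j:ℝ) - 1) / N) * (1/2))
            (Real.pi * ((j:ℝ) - 1) / N)
        rw [show ((Real.pi * (j:ℝ) - Real.pi) - (Real.pi * ((j:ℝ) - 1) / N) * (1/2)) + (Real.pi * ((j:ℝ) - 1) / N)
              = (Real.pi * (j:ℝ) - Real.pi) + (Real.pi * ((j:ℝ) - 1) / N) * (1/2) from by ring,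
            show ((Real.pi * (j:ℝ) - Real.pi) - (Real.pi * ((j:ℝ) - 1) / N) * (1/2)) - (Real.pi * ((j:ℝ) - 1) / N)
              = (Real.pi * (j:ℝ) - Real.pi) - (Real.pi * ((j:ℝ) - 1) / N) * (3/2) from by ring,
            hB] at h
        linarith
      rw [hts]
      linear_combination (-(Real.sqrt (2 / (N:ℝ)) * (1 / Real.sin (2 * θ / N)))) * hI1
    · -- interior row
      rw [if_neg (show ¬ (i.val = 0 ∨ i.val = N - 1) by omega),
          dif_pos (show i.val + 1 < N by omega), dif_pos (show 0 < i.val by omega)]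
      have hER : (Real.pi * ((j:ℝ) - 1) / N) * ((((i:ℕ) + 1 :ℕ):ℝ) + 1 - 1 / 2)
          = (Real.pi * ((j:ℝ) - 1) / N) * (((i:ℕ):ℝ) + 1 - 1 / 2) + (Real.pi * ((j:ℝ) - 1) / N) := by
        push_cast; ring
      have hEL : (Real.pi * ((j:ℝ) - 1) / N) * ((((i:ℕ) - 1 :ℕ):ℝ) + 1 - 1 / 2)
          = (Real.pi * ((j:ℝ) - 1) / N) * (((i:ℕ):ℝ) + 1 - 1 / 2) - (Real.pi * ((j:ℝ) - 1) / N) := by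
        rw [Nat.cast_sub (by omega : 1 ≤ (i:ℕ))]; ring
      rw [hER, hEL]
      linear_combination (-(Real.sqrt (2 / (N:ℝ)) * (1 / Real.sin (2 * θ / N))))
        * I2 ((Real.pi * ((j:ℝ) - 1) / N) * (((i:ℕ):ℝ) + 1 - 1 / 2)) (Real.pi * ((j:ℝ) - 1) / N)
end

section
/- For the tridiagonal matrices D (with entries d = tan(θ/N) - cot(2θ/N), e = -2cot(2θ/N), f = csc(2θ/N)) and D_g (with entries d_g = cot(2θ/N) + cot(θ/N), e_g = 2cot(2θ/N), f_g = -csc(2θ/N)), and the tridiagonal matrix C with first row (1,1,0,...,0), last row (0,...,0,-1,-1), and interior rows having -1, 0, 1 on the sub-, main, and super-diagonal respectively, the identity C·D_g = -D·C holds for every N ≥ 2 and θ ∈ (0, Nπ/2) away from the singularities of the trigonometric functions. -/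
open Real Matrix

private lemma sum_two' {n : ℕ} (f : Fin n → ℝ) (a b : Fin n) (hab : a ≠ b)
    (h : ∀ k, k ≠ a → k ≠ b → f k = 0) :
    ∑ k, f k = f a + f b := by
  rw [← Finset.sum_subset (Finset.subset_univ ({a, b} : Finset (Fin n)))]
  · rw [Finset.sum_insert (by simp [hab]), Finset.sum_singleton]
  · intro k _ hk
    simp only [Finset.mem_insert, Finset.mem_singleton, not_or] at hk
    exact h k hk.1 hk.2

private lemma sum_three' {n : ℕ} (f : Fin n → ℝ) (a b c : Fin n)
    (hab : a ≠ b) (hac : a ≠ c) (hbc : b ≠ c)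
    (h : ∀ k, k ≠ a → k ≠ b → k ≠ c → f k = 0) :
    ∑ k, f k = f a + f b + f c := by
  rw [← Finset.sum_subset (Finset.subset_univ ({a, b, c} : Finset (Fin n)))]
  · rw [Finset.sum_insert (by simp [hab, hac]), Finset.sum_insert (by simp [hbc]),
      Finset.sum_singleton]; ring
  · intro k _ hk
    simp only [Finset.mem_insert, Finset.mem_singleton, not_or] at hk
    exact h k hk.1 hk.2.1 hk.2.2

set_option maxHeartbeats 4000000 in
/-- The tridiagonal matrix identity `C·D_g = -D·C` relating the Green's matrix `D`,
the dipole matrix `D_g`, and the difference matrix `C`. -/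
theorem matrix_identity_C_Dg (N : ℕ) (hN : 2 ≤ N) (θ : ℝ)
    (hθ : 0 < θ) (hθN : θ < N * Real.pi / 2)
    (hsin : Real.sin (2 * θ / N) ≠ 0) (hcos : Real.cos (θ / N) ≠ 0)
    (D Dg C : Matrix (Fin N) (Fin N) ℝ)
    (hD : D = Matrix.of fun i j =>
      if i = j then
        (if i.val = 0 ∨ i.val = N - 1 then Real.tan (θ / N) - Real.cot (2 * θ / N)
          else -2 * Real.cot (2 * θ / N))
      else if i.val + 1 = j.val ∨ j.val + 1 = i.val then 1 / Real.sin (2 * θ / N)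
      else 0)
    (hDg : Dg = Matrix.of fun i j =>
      if i = j then
        (if i.val = 0 ∨ i.val = N - 1 then Real.cot (2 * θ / N) + Real.cot (θ / N)
          else 2 * Real.cot (2 * θ / N))
      else if i.val + 1 = j.val ∨ j.val + 1 = i.val then -(1 / Real.sin (2 * θ / N))
      else 0)
    (hC : C = Matrix.of fun i j =>
      if i.val = 0 then (if j.val ≤ 1 then 1 else 0)
      else if i.val = N - 1 then (if N - 2 ≤ j.val then -1 else 0)
      else if j.val + 1 = i.val then -1
      else if i.val + 1 = j.val then 1
      else 0) :
    C * Dg = -(D * C) := by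
  have h2 : 2 * θ / (N:ℝ) = 2 * (θ / N) := by ring
  have hsx : Real.sin (θ / N) ≠ 0 := by
    intro h0; apply hsin; rw [h2, Real.sin_two_mul, h0]; ring
  have hcotx : Real.cot (θ / N) = Real.cot (2 * θ / N) + 1 / Real.sin (2 * θ / N) := by
    rw [h2] at hsin ⊢
    rw [Real.cot_eq_cos_div_sin, Real.cot_eq_cos_div_sin, Real.sin_two_mul, Real.cos_two_mul]
    rw [Real.sin_two_mul] at hsin
    field_simp
    ring
  have htanx : Real.tan (θ / N) = 1 / Real.sin (2 * θ / N) - Real.cot (2 * θ / N) := by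
    rw [h2] at hsin ⊢
    rw [Real.tan_eq_sin_div_cos, Real.cot_eq_cos_div_sin, Real.sin_two_mul, Real.cos_two_mul]
    rw [Real.sin_two_mul] at hsin
    field_simp
    linear_combination 2 * Real.sin_sq_add_cos_sq (θ/N)
  subst hD hDg hC
  ext i j
  simp only [Matrix.mul_apply, Matrix.neg_apply]
  by_cases hi0 : i.val = 0
  · rw [sum_two' _ ⟨0, by omega⟩ ⟨1, by omega⟩ (by simp [Fin.ext_iff])
      (by intro k h1 h2'
          have h1' := Fin.ext_iff.not.mp h1
          have h2'' := Fin.ext_iff.not.mp h2'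
          simp only [Fin.val_mk] at h1' h2''
          simp only [Matrix.of_apply, Fin.ext_iff, Fin.val_mk]
          split_ifs <;> first | (exfalso; omega) | ring),
      sum_two' _ ⟨0, by omega⟩ ⟨1, by omega⟩ (by simp [Fin.ext_iff])
      (by intro k h1 h2'
          have h1' := Fin.ext_iff.not.mp h1
          have h2'' := Fin.ext_iff.not.mp h2'
          simp only [Fin.val_mk] at h1' h2''
          simp only [Matrix.of_apply, Fin.ext_iff, Fin.val_mk]
          split_ifs <;> first | (exfalso; omega) | ring)]
    simp only [Matrix.of_apply, Fin.ext_iff, Fin.val_mk, hi0]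
    norm_num
    all_goals split_ifs <;>
      first | (exfalso; omega) | linarith [hcotx, htanx] |
        (ring_nf; ring_nf at hcotx htanx; linarith [hcotx, htanx])
  · by_cases hiN : i.val = N - 1
    · have eM : N - 2 + 1 = N - 1 := by omega
      have e1 : ¬(N - 1 = 0) := by omega
      have e2 : ¬(N - 1 = N - 2) := by omega
      have e3 : ¬(N - 1 + 1 = N - 2) := by omega
      have e4 : ¬(N - 1 + 1 = N - 1) := by omega
      rw [sum_two' _ ⟨N - 2, by omega⟩ ⟨N - 1, by omega⟩ (by simp [Fin.ext_iff] <;> omega)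
        (by intro k h1 h2'
            have h1' := Fin.ext_iff.not.mp h1
            have h2'' := Fin.ext_iff.not.mp h2'
            simp only [Fin.val_mk] at h1' h2''
            simp only [Matrix.of_apply, Fin.ext_iff, Fin.val_mk]
            split_ifs <;> first | (exfalso; omega) | ring),
        sum_two' _ ⟨N - 2, by omega⟩ ⟨N - 1, by omega⟩ (by simp [Fin.ext_iff] <;> omega)
        (by intro k h1 h2'
            have h1' := Fin.ext_iff.not.mp h1
            have h2'' := Fin.ext_iff.not.mp h2'
            simp only [Fin.val_mk] at h1' h2''
            simp only [Matrix.of_apply, Fin.ext_iff, Fin.val_mk]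
            split_ifs <;> first | (exfalso; omega) | ring)]
      simp only [Matrix.of_apply, Fin.ext_iff, Fin.val_mk, hiN, eM, e1, e2, e3, e4,
        if_true, eq_self_iff_true, if_false, not_false_iff, or_false, false_or, or_true,
        if_neg, ite_false, ite_true]
      all_goals split_ifs <;>
        first | (exfalso; omega) | linarith [hcotx, htanx] |
          (ring_nf; ring_nf at hcotx htanx; linarith [hcotx, htanx])
    · have hi1 : 0 < i.val := by omega
      have hi2 : i.val < N - 1 := by omega
      have eM : i.val - 1 + 1 = i.val := by omega
      have e1 : ¬(i.val = 0) := hi0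
      have e2 : ¬(i.val = N - 1) := hiN
      have e3 : ¬(i.val - 1 = N - 1) := by omega
      have e4 : ¬(i.val + 1 = 0) := by omega
      have e5 : ¬(i.val = i.val - 1) := by omega
      have e6 : ¬(i.val = i.val + 1) := by omega
      have e7 : ¬(i.val + 1 = i.val - 1) := by omega
      have e8 : ¬(i.val + 1 + 1 = i.val) := by omega
      rw [sum_two' _ ⟨i.val - 1, by omega⟩ ⟨i.val + 1, by omega⟩ (by simp [Fin.ext_iff] <;> omega)
        (by intro k h1 h2'
            have h1' := Fin.ext_iff.not.mp h1
            have h2'' := Fin.ext_iff.not.mp h2'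
            simp only [Fin.val_mk] at h1' h2''
            simp only [Matrix.of_apply, Fin.ext_iff, Fin.val_mk]
            split_ifs <;> first | (exfalso; omega) | ring),
        sum_three' _ ⟨i.val - 1, by omega⟩ i ⟨i.val + 1, by omega⟩
        (by simp [Fin.ext_iff] <;> omega) (by simp [Fin.ext_iff] <;> omega)
        (by simp [Fin.ext_iff] <;> omega)
        (by intro k h1 h2' h3
            have h1' := Fin.ext_iff.not.mp h1
            have h2'' := Fin.ext_iff.not.mp h2'
            have h3' := Fin.ext_iff.not.mp h3
            simp only [Fin.val_mk] at h1' h2'' h3'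
            simp only [Matrix.of_apply, Fin.ext_iff, Fin.val_mk]
            split_ifs <;> first | (exfalso; omega) | ring)]
      simp only [Matrix.of_apply, Fin.ext_iff, Fin.val_mk, eM, e1, e2, e3, e4, e5, e6, e7, e8,
        if_true, eq_self_iff_true, if_false, not_false_iff, or_false, false_or, or_true,
        if_neg, ite_false, ite_true]
      all_goals split_ifs <;>
        first | (exfalso; omega) | linarith [hcotx, htanx] |
          (ring_nf; ring_nf at hcotx htanx; linarith [hcotx, htanx])
end

section
/- Define B(ℓ) = v(ℓ)³/sin(θℓ) where v(ℓ) > 0 satisfies v·e^{χv}·cot(θℓ) = K for a constant K > 0, with θ, χ > 0 and θℓ ∈ (0, π/2). Then B'(ℓ) = θv³/(sin²(θℓ)cos(θℓ))·[3/(1 + χv) - cos²(θℓ)], and B'(ℓ) = 0 if and only if cos(2θℓ) = (1-a₁)/(1+a₁) where a₁ = (χv - 2)/3. -/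
open Real

/-- Bifurcation point for asymmetric spike equilibria: with `B(ℓ) = v(ℓ)³/sin(θℓ)`
and `v·e^{χv}·cot(θℓ) = K`, the derivative satisfies
`B'(ℓ) = θv³/(sin²(θℓ)cos(θℓ))·[3/(1+χv) - cos²(θℓ)]`, and `B'(ℓ) = 0` iff
`cos(2θℓ) = (1-a₁)/(1+a₁)` with `a₁ = (χv-2)/3`. -/
theorem asymmetric_bifurcation_point (θ χ K : ℝ) (hθ : 0 < θ) (hχ : 0 < χ)
    (hK : 0 < K)
    (v : ℝ → ℝ) (B : ℝ → ℝ)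
    (hB : B = fun l => (v l) ^ 3 / Real.sin (θ * l))
    (ℓ : ℝ) (hℓ : θ * ℓ ∈ Set.Ioo 0 (Real.pi / 2))
    (hv : DifferentiableAt ℝ v ℓ) (hvpos : 0 < v ℓ)
    (hrel : ∀ l : ℝ, θ * l ∈ Set.Ioo 0 (Real.pi / 2) →
      v l * Real.exp (χ * v l) * Real.cot (θ * l) = K) :
    deriv B ℓ =
        θ * (v ℓ) ^ 3 / (Real.sin (θ * ℓ) ^ 2 * Real.cos (θ * ℓ)) *
          (3 / (1 + χ * v ℓ) - Real.cos (θ * ℓ) ^ 2) ∧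
      (deriv B ℓ = 0 ↔
        Real.cos (2 * θ * ℓ) = (1 - (χ * v ℓ - 2) / 3) / (1 + (χ * v ℓ - 2) / 3)) := by
  obtain ⟨hl1, hl2⟩ := hℓ
  have hpi := Real.pi_pos
  have hs : 0 < Real.sin (θ * ℓ) := Real.sin_pos_of_pos_of_lt_pi hl1 (by linarith)
  have hc : 0 < Real.cos (θ * ℓ) := Real.cos_pos_of_mem_Ioo ⟨by linarith, hl2⟩
  set V := v ℓ with hV
  set V' := deriv v ℓ with hV'
  set s := Real.sin (θ * ℓ) with hsdef
  set c := Real.cos (θ * ℓ) with hcdef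
  have hE : (0:ℝ) < Real.exp (χ * V) := Real.exp_pos _
  have hvd : HasDerivAt v V' ℓ := hv.hasDerivAt
  have hid : HasDerivAt (fun l : ℝ => θ * l) θ ℓ := by
    simpa using (hasDerivAt_id ℓ).const_mul θ
  have hsin : HasDerivAt (fun l => Real.sin (θ * l)) (c * θ) ℓ :=
    (Real.hasDerivAt_sin (θ * ℓ)).comp ℓ hid
  have hcos : HasDerivAt (fun l => Real.cos (θ * l)) (-s * θ) ℓ :=
    (Real.hasDerivAt_cos (θ * ℓ)).comp ℓ hid
  have hexp : HasDerivAt (fun l => Real.exp (χ * v l)) (Real.exp (χ * V) * (χ * V')) ℓ :=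
    (hvd.const_mul χ).exp
  -- derivative of the implicit relation
  have hgd : HasDerivAt (fun l => v l * Real.exp (χ * v l) * (Real.cos (θ * l) / Real.sin (θ * l)))
      ((V' * Real.exp (χ * V) + V * (Real.exp (χ * V) * (χ * V'))) * (c / s)
        + (V * Real.exp (χ * V)) * ((-s * θ * s - c * (c * θ)) / s ^ 2)) ℓ :=
    (hvd.mul hexp).mul (hcos.div hsin hs.ne')
  have hU : {l : ℝ | θ * l ∈ Set.Ioo 0 (Real.pi / 2)} ∈ nhds ℓ := by
    have : IsOpen {l : ℝ | θ * l ∈ Set.Ioo 0 (Real.pi / 2)} :=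
      isOpen_Ioo.preimage (by fun_prop)
    exact this.mem_nhds ⟨hl1, hl2⟩
  have heq : (fun l => v l * Real.exp (χ * v l) * (Real.cos (θ * l) / Real.sin (θ * l)))
      =ᶠ[nhds ℓ] fun _ => K := by
    filter_upwards [hU] with l hl
    have := hrel l hl
    rwa [Real.cot_eq_cos_div_sin] at this
  have hD0 : (V' * Real.exp (χ * V) + V * (Real.exp (χ * V) * (χ * V'))) * (c / s)
        + (V * Real.exp (χ * V)) * ((-s * θ * s - c * (c * θ)) / s ^ 2) = 0 := by
    have h2 : HasDerivAt (fun l => v l * Real.exp (χ * v l) * (Real.cos (θ * l) / Real.sin (θ * l)))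
        0 ℓ := (hasDerivAt_const ℓ K).congr_of_eventuallyEq heq
    exact h2.unique hgd ▸ rfl
  have hsc : s ^ 2 + c ^ 2 = 1 := Real.sin_sq_add_cos_sq (θ * ℓ)
  have hkey : V' * (1 + χ * V) * c * s = θ * V := by
    have h := hD0
    field_simp at h
    have hEs : Real.exp (χ * V) * s ≠ 0 := ne_of_gt (by positivity)
    refine mul_right_cancel₀ hEs ?_
    linear_combination s * h + V * Real.exp (χ * V) * θ * s * hsc
  have hBd : HasDerivAt B (((3 : ℕ) * V ^ 2 * V' * s - V ^ 3 * (c * θ)) / s ^ 2) ℓ := by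
    rw [hB]
    exact (hvd.pow 3).div hsin hs.ne'
  have h1pos : 0 < 1 + χ * V := by positivity
  have heq1 : deriv B ℓ = θ * V ^ 3 / (s ^ 2 * c) * (3 / (1 + χ * V) - c ^ 2) := by
    rw [hBd.deriv]
    field_simp
    linear_combination 3 * hkey
  refine ⟨heq1, ?_⟩
  have h2 : Real.cos (2 * θ * ℓ) = 2 * c ^ 2 - 1 := by
    rw [show 2 * θ * ℓ = 2 * (θ * ℓ) by ring]
    exact Real.cos_two_mul (θ * ℓ)
  have hpre : 0 < θ * V ^ 3 / (s ^ 2 * c) := by positivity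
  rw [heq1, h2, mul_eq_zero]
  have h13 : (1 : ℝ) + (χ * V - 2) / 3 ≠ 0 := by
    intro h0; nlinarith
  have hR : (1 - (χ * V - 2) / 3) / (1 + (χ * V - 2) / 3) = (5 - χ * V) / (1 + χ * V) := by
    rw [div_eq_div_iff h13 h1pos.ne']
    ring
  rw [hR]
  constructor
  · rintro (h | h)
    · exact absurd h hpre.ne'
    · have h' : 3 / (1 + χ * V) = c ^ 2 := by linarith
      have hc2 : c ^ 2 * (1 + χ * V) = 3 := by
        rw [← h', div_mul_cancel₀ _ h1pos.ne']
      rw [eq_div_iff h1pos.ne']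
      linear_combination 2 * hc2
  · intro h
    right
    rw [eq_div_iff h1pos.ne'] at h
    have hc2 : c ^ 2 * (1 + χ * V) = 3 := by linear_combination h / 2
    have h' : 3 / (1 + χ * V) = c ^ 2 := by
      rw [div_eq_iff h1pos.ne']; linarith
    linarith
end
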